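/- Let M ⊆ ℤ be a Maya diagram, B = {(i_n, j_n)}_{n∈ℤ} its bent diagram, λ the partition associated to M, F the Ferrer's diagram of λ, and F' the rim of F. Then F' = {(i_n, j_n) : n ∈ ℤ} ∩ (ℕ×ℕ), i.e. the rim of F consists exactly of those points of the bent diagram both of whose coordinates are positive. -/

import Mathlib

/-- A Maya diagram: a set of integers containing only finitely many non-negative
integers and excluding only finitely many negative integers. -/
def IsMaya (M : Set ℤ) : Prop :=
  {m : ℤ | m ∈ M ∧ 0 ≤ m}.Finite ∧ {m : ℤ | m < 0 ∧ m ∉ M}.Finite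

/-- The shifted Maya diagram `M - k = {m - k : m ∈ M}`. -/
def shiftM (M : Set ℤ) (k : ℤ) : Set ℤ := {m : ℤ | m + k ∈ M}

/-- `M₊`, viewed as a subset of ℕ. -/
def MayaPlus (M : Set ℤ) : Set ℕ := {a : ℕ | (a : ℤ) ∈ M}

/-- `M₋ = {-m-1 : m < 0, m ∉ M}`, viewed as a subset of ℕ. -/
def MayaMinus (M : Set ℤ) : Set ℕ := {a : ℕ | (-(a : ℤ) - 1) ∉ M}

/-- The girth `|M| = #M₋ + #M₊`. -/
noncomputable def girth (M : Set ℤ) : ℕ := (MayaMinus M).ncard + (MayaPlus M).ncard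

/-- Physicists' Hermite polynomial `H_n(x) = (-1)^n e^{x²} Dⁿ e^{-x²}`, as a real function. -/
noncomputable def physHermite (n : ℕ) : ℝ → ℝ :=
  fun x => (-1 : ℝ) ^ n * Real.exp (x ^ 2) * iteratedDeriv n (fun y => Real.exp (-y ^ 2)) x

/-- The complex Hermite function `(-1)^n e^{z²} Dⁿ e^{-z²}`. -/
noncomputable def hermiteC (n : ℕ) : ℂ → ℂ :=
  fun z => (-1 : ℂ) ^ n * Complex.exp (z ^ 2) * iteratedDeriv n (fun w => Complex.exp (-w ^ 2)) z

/-- Conjugate Hermite polynomial `θ_n(x) = i^{-n} H_n(i x)`, as a real function. -/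
noncomputable def conjHermite (n : ℕ) : ℝ → ℝ :=
  fun x => (Complex.I ^ (-(n : ℤ)) * hermiteC n (Complex.I * x)).re

/-- The Hermite pseudo-Wronskian of a Maya diagram with Frobenius symbol
`(s₁,…,s_p | t₁,…,t_q)`:
`H_M(x) = e^{-p x²} · Wr[e^{x²}θ_{s₁}, …, e^{x²}θ_{s_p}, H_{t_q}, …, H_{t₁}](x)`.
Here `s i` is `s_{i+1}` and `t j` is `t_{j+1}` (0-based indexing). -/
noncomputable def pW (p q : ℕ) (s : Fin p → ℕ) (t : Fin q → ℕ) (x : ℝ) : ℝ :=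
  Real.exp (-(p : ℝ) * x ^ 2) *
    Matrix.det (Matrix.of fun i k : Fin (p + q) =>
      iteratedDeriv (k : ℕ)
        (fun y => if h : (i : ℕ) < p then Real.exp (y ^ 2) * conjHermite (s ⟨i, h⟩) y
          else physHermite (t ⟨p + q - 1 - (i : ℕ), by have := i.isLt; omega⟩) y) x)

/-- `(s₁,…,s_p | t₁,…,t_q)` is the Frobenius symbol of `M`. -/
def IsFrobenius {p q : ℕ} (M : Set ℤ) (s : Fin p → ℕ) (t : Fin q → ℕ) : Prop :=
  StrictAnti s ∧ StrictAnti t ∧ Set.range s = MayaMinus M ∧ Set.range t = MayaPlus M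

/-- `i_n = #{m ∉ M : m < n}`. -/
noncomputable def iN (M : Set ℤ) (n : ℤ) : ℕ := {m : ℤ | m ∉ M ∧ m < n}.ncard

/-- `j_n = #{m ∈ M : m ≥ n}`. -/
noncomputable def jN (M : Set ℤ) (n : ℤ) : ℕ := {m : ℤ | m ∈ M ∧ n ≤ m}.ncard

/-- `M` is in standard form. -/
def IsStandard (M : Set ℤ) : Prop := 0 ∉ M ∧ ∀ m : ℤ, m < 0 → m ∈ M

lemma finite_notM_lt (M : Set ℤ) (hM : IsMaya M) (n : ℤ) :
    {x : ℤ | x ∉ M ∧ x < n}.Finite := by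
  apply Set.Finite.subset (hM.2.union (Set.finite_Ico 0 n))
  intro x hx
  rcases lt_or_ge x 0 with h | h
  · exact Or.inl ⟨h, hx.1⟩
  · exact Or.inr ⟨h, hx.2⟩

lemma finite_M_ge (M : Set ℤ) (hM : IsMaya M) (n : ℤ) :
    {x : ℤ | x ∈ M ∧ n ≤ x}.Finite := by
  apply Set.Finite.subset (hM.1.union (Set.finite_Ico n 0))
  intro x hx
  rcases le_or_gt 0 x with h | h
  · exact Or.inl ⟨hx.1, h⟩
  · exact Or.inr ⟨hx.2, h⟩

lemma iN_mono (M : Set ℤ) (hM : IsMaya M) {a b : ℤ} (h : a ≤ b) : iN M a ≤ iN M b :=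
  Set.ncard_le_ncard (fun x hx => ⟨hx.1, lt_of_lt_of_le hx.2 h⟩) (finite_notM_lt M hM b)

lemma iN_succ_mem (M : Set ℤ) (hM : IsMaya M) {n : ℤ} (h : n ∈ M) :
    iN M (n + 1) = iN M n := by
  have hs : {x : ℤ | x ∉ M ∧ x < n + 1} = {x : ℤ | x ∉ M ∧ x < n} := by
      ext x
      constructor
      · rintro ⟨h1, h2⟩
        refine ⟨h1, ?_⟩
        rcases eq_or_ne x n with rfl | hne
        · exact absurd h h1
        · omega
      · rintro ⟨h1, h2⟩; exact ⟨h1, by omega⟩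
  simp only [iN, hs]

lemma iN_succ_notMem (M : Set ℤ) (hM : IsMaya M) {n : ℤ} (h : n ∉ M) :
    iN M (n + 1) = iN M n + 1 := by
  have hs : {x : ℤ | x ∉ M ∧ x < n + 1} = insert n {x : ℤ | x ∉ M ∧ x < n} := by
      ext x
      simp only [Set.mem_insert_iff, Set.mem_setOf_eq]
      constructor
      · rintro ⟨h1, h2⟩
        rcases eq_or_ne x n with rfl | hne
        · exact Or.inl rfl
        · exact Or.inr ⟨h1, by omega⟩
      · rintro (rfl | ⟨h1, h2⟩)
        · exact ⟨h, by omega⟩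
        · exact ⟨h1, by omega⟩
  rw [iN, hs, Set.ncard_insert_of_notMem (by simp) (finite_notM_lt M hM n)]
  rfl

lemma iN_succ_le (M : Set ℤ) (hM : IsMaya M) (n : ℤ) :
    iN M (n + 1) ≤ iN M n + 1 := by
  by_cases h : n ∈ M
  · rw [iN_succ_mem M hM h]; omega
  · rw [iN_succ_notMem M hM h]

lemma iN_ivt (M : Set ℤ) (hM : IsMaya M) : ∀ (d : ℕ) (a : ℤ) (i : ℕ),
    iN M a ≤ i → i ≤ iN M (a + d) → ∃ n, a ≤ n ∧ n ≤ a + d ∧ iN M n = i := by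
  intro d
  induction d with
  | zero =>
    intro a i h1 h2
    have : a + ((0 : ℕ) : ℤ) = a := by simp
    rw [this] at h2
    exact ⟨a, le_rfl, by omega, by omega⟩
  | succ d ih =>
    intro a i h1 h2
    have hcast : a + ((d + 1 : ℕ) : ℤ) = a + d + 1 := by push_cast; ring
    rw [hcast] at h2
    have hstep : iN M (a + d + 1) ≤ iN M (a + d) + 1 := iN_succ_le M hM _
    rcases le_or_gt i (iN M (a + d)) with h | h
    · obtain ⟨n, hn1, hn2, hn3⟩ := ih a i h1 h
      exact ⟨n, hn1, by omega, hn3⟩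
    · exact ⟨a + d + 1, by omega, by omega, by omega⟩

lemma jN_between (M : Set ℤ) (m : ℕ → ℤ) (hm : StrictAnti m) (hrange : Set.range m = M)
    (k : ℕ) {n : ℤ} (h1 : m (k + 1) < n) (h2 : n ≤ m k) : jN M n = k + 1 := by
  have hset : {x : ℤ | x ∈ M ∧ n ≤ x} = m '' Set.Iic k := by
    ext x
    simp only [Set.mem_setOf_eq, Set.mem_image, Set.mem_Iic]
    constructor
    · rintro ⟨hxM, hnx⟩
      rw [← hrange] at hxM
      obtain ⟨t, rfl⟩ := hxM
      refine ⟨t, ?_, rfl⟩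
      by_contra ht
      push_neg at ht
      have : m t ≤ m (k + 1) := hm.antitone (by omega)
      omega
    · rintro ⟨t, ht, rfl⟩
      refine ⟨by rw [← hrange]; exact Set.mem_range_self t, le_trans h2 (hm.antitone ht)⟩
  rw [jN, hset, Set.ncard_image_of_injective _ hm.injective,
    ← Finset.coe_Iic, Set.ncard_coe_finset, Nat.card_Iic]

lemma le_of_jN (M : Set ℤ) (hM : IsMaya M) (m : ℕ → ℤ) (hm : StrictAnti m)
    (hrange : Set.range m = M) (k : ℕ) {n : ℤ} (h : jN M n = k + 1) : n ≤ m k := by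
  by_contra hc
  push_neg at hc
  have hsub : {x : ℤ | x ∈ M ∧ n ≤ x} ⊆ m '' Set.Iio k := by
    rintro x ⟨hxM, hnx⟩
    rw [← hrange] at hxM
    obtain ⟨t, rfl⟩ := hxM
    refine ⟨t, ?_, rfl⟩
    simp only [Set.mem_Iio]
    by_contra ht
    push_neg at ht
    have : m t ≤ m k := hm.antitone ht
    omega
  have hle := Set.ncard_le_ncard hsub ((Set.finite_Iio k).image m)
  rw [Set.ncard_image_of_injective _ hm.injective, ← Finset.coe_Iio,
    Set.ncard_coe_finset, Nat.card_Iio] at hle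
  rw [jN] at h
  omega

lemma lt_of_jN (M : Set ℤ) (hM : IsMaya M) (m : ℕ → ℤ) (hm : StrictAnti m)
    (hrange : Set.range m = M) (k : ℕ) {n : ℤ} (h : jN M n = k + 1) : m (k + 1) < n := by
  by_contra hc
  push_neg at hc
  have hsub : m '' Set.Iic (k + 1) ⊆ {x : ℤ | x ∈ M ∧ n ≤ x} := by
    rintro x ⟨t, ht, rfl⟩
    refine ⟨by rw [← hrange]; exact Set.mem_range_self t, le_trans hc (hm.antitone ht)⟩
  have hle := Set.ncard_le_ncard hsub (finite_M_ge M hM n)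
  rw [Set.ncard_image_of_injective _ hm.injective, ← Finset.coe_Iic,
    Set.ncard_coe_finset, Nat.card_Iic] at hle
  rw [jN] at h
  omega

/-- The rim of the Ferrer's diagram of the partition associated to a Maya
diagram `M` consists exactly of those points of the bent diagram of `M` with both
coordinates positive.  Here `lam` is the 0-based partition (`lam (j-1)` is the paper's
`λ_j`) and `F` is its Ferrer's diagram. -/
theorem rim_eq_bent_diagram (M : Set ℤ) (hM : IsMaya M) (m : ℕ → ℤ)
    (hm : StrictAnti m) (hrange : Set.range m = M)
    (lam : ℕ → ℕ) (hlam : ∀ i : ℕ, lam i = {x : ℤ | x ∉ M ∧ x < m i}.ncard)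
    (F : Set (ℕ × ℕ))
    (hF : F = {p : ℕ × ℕ | 1 ≤ p.1 ∧ 1 ≤ p.2 ∧ p.1 ≤ lam (p.2 - 1)}) :
    {p ∈ F | (p.1 + 1, p.2 + 1) ∉ F} =
      {p : ℕ × ℕ | 1 ≤ p.1 ∧ 1 ≤ p.2 ∧ ∃ n : ℤ, iN M n = p.1 ∧ jN M n = p.2} := by
  have hmM : ∀ t : ℕ, m t ∈ M := fun t => by rw [← hrange]; exact Set.mem_range_self t
  have hlam' : ∀ t : ℕ, iN M (m t) = lam t := fun t => (hlam t).symm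
  have hlam'' : ∀ t : ℕ, iN M (m (t + 1) + 1) = lam (t + 1) := fun t => by
    rw [iN_succ_mem M hM (hmM (t + 1))]; exact hlam' (t + 1)
  subst hF
  ext ⟨i, j⟩
  simp only [Set.mem_setOf_eq, Set.mem_sep_iff, Nat.add_sub_cancel]
  constructor
  · rintro ⟨⟨hi1, hj1, hle⟩, hnot⟩
    have hlamj : lam j ≤ i := by
      by_contra h
      exact hnot ⟨by omega, by omega, by omega⟩
    obtain ⟨k, rfl⟩ : ∃ k, j = k + 1 := ⟨j - 1, by omega⟩
    rw [Nat.add_sub_cancel] at hle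
    have hmk : m (k + 1) < m k := hm (by omega)
    have hab : m (k + 1) + 1 + ((m k - (m (k + 1) + 1)).toNat : ℤ) = m k := by omega
    obtain ⟨n, hn1, hn2, hn3⟩ := iN_ivt M hM (m k - (m (k + 1) + 1)).toNat
      (m (k + 1) + 1) i (by rw [hlam'']; exact hlamj) (by rw [hab, hlam']; exact hle)
    rw [hab] at hn2
    exact ⟨hi1, by omega, n, hn3, jN_between M m hm hrange k (by omega) hn2⟩
  · rintro ⟨hi1, hj1, n, hiN, hjN⟩
    obtain ⟨k, rfl⟩ : ∃ k, j = k + 1 := ⟨j - 1, by omega⟩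
    have h2 : n ≤ m k := le_of_jN M hM m hm hrange k hjN
    have h1 : m (k + 1) < n := lt_of_jN M hM m hm hrange k hjN
    have hup : i ≤ lam k := by
      rw [← hiN, ← hlam' k]; exact iN_mono M hM h2
    have hlo : lam (k + 1) ≤ i := by
      rw [← hiN, ← hlam'' k]; exact iN_mono M hM (by omega)
    refine ⟨⟨hi1, by omega, by rwa [Nat.add_sub_cancel]⟩, ?_⟩
    rintro ⟨-, -, hc⟩
    omega
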